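/- arXiv:2105.07524 — 5 statements merged into one kernel-verified Lean document; each statement's English description precedes it below -/
import Mathlib

section
/- Let F be a probability measure on [0,∞), γ, B̄, σ̄ > 0 constants, λ : [0,T] → [0, δ(t)] with δ integrable, K : [0,T]×[0,∞) → [0,1). Define for (t,y) the lower bound w*(t,y) ≥ min{0, (μ(t)-r(t))/(γB(t,T)σ²(t)) - δ(t)∫₀^∞ e^{γB(t,T)z} dF(z)/(γB(t,T)σ²(t))}. Precisely: if w̃ < 0 solves γB σ² w̃ - (μ-r) + λ∫₀^∞ K(z) e^{γB(z + w̃K(z))} dF(z) = 0 with λ ≤ δ and K(z) ∈ [0,1), then w̃ ≥ (μ-r)/(γBσ²) - δ∫₀^∞ e^{γBz} dF(z)/(γBσ²). -/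
open MeasureTheory Real Set

/-- Lower bound (5.12) on the optimal investment strategy (Proposition 5.5):
if w̃ < 0 solves the first-order condition at u = 1, then
w̃ ≥ (μ-r)/(γBσ²) - δ ∫ e^{γBz} dF /(γBσ²). -/
theorem stmt_4 (γ B σ lam δ μ r wt : ℝ)
    (hγ : 0 < γ) (hB : 0 < B) (hσ : 0 < σ) (hlam : 0 ≤ lam) (hlamδ : lam ≤ δ)
    (F : Measure ℝ) [IsProbabilityMeasure F] (hF0 : F (Set.Iio 0) = 0)
    (K : ℝ → ℝ) (hKmeas : Measurable K) (hK : ∀ z, 0 ≤ K z ∧ K z < 1)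
    (hexp : Integrable (fun z => Real.exp (γ * B * z)) F)
    (hint : Integrable (fun z => K z * Real.exp (γ * B * (z + wt * K z))) F)
    (hwneg : wt < 0)
    (hroot : γ * B * σ ^ 2 * wt - (μ - r)
        + lam * ∫ z, K z * Real.exp (γ * B * (z + wt * K z)) ∂F = 0) :
    (μ - r) / (γ * B * σ ^ 2)
        - δ * (∫ z, Real.exp (γ * B * z) ∂F) / (γ * B * σ ^ 2) ≤ wt := by
  have hc : 0 < γ * B * σ ^ 2 := by positivity
  -- pointwise bound
  have hpt : ∀ z, K z * Real.exp (γ * B * (z + wt * K z)) ≤ Real.exp (γ * B * z) := by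
    intro z
    obtain ⟨hK0, hK1⟩ := hK z
    have : Real.exp (γ * B * (z + wt * K z)) ≤ Real.exp (γ * B * z) := by
      apply Real.exp_le_exp.mpr
      have h1 : wt * K z ≤ 0 := mul_nonpos_of_nonpos_of_nonneg hwneg.le hK0
      have h2 := mul_le_mul_of_nonneg_left (show z + wt * K z ≤ z by linarith)
        (show (0:ℝ) ≤ γ * B by positivity)
      linarith
    calc K z * Real.exp (γ * B * (z + wt * K z))
        ≤ 1 * Real.exp (γ * B * z) := by
          apply mul_le_mul hK1.le this (Real.exp_pos _).le zero_le_one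
      _ = _ := one_mul _
  have hImono : (∫ z, K z * Real.exp (γ * B * (z + wt * K z)) ∂F)
      ≤ ∫ z, Real.exp (γ * B * z) ∂F :=
    integral_mono hint hexp hpt
  have hInn : 0 ≤ ∫ z, K z * Real.exp (γ * B * (z + wt * K z)) ∂F :=
    integral_nonneg fun z => mul_nonneg (hK z).1 (Real.exp_pos _).le
  have hEnn : 0 ≤ ∫ z, Real.exp (γ * B * z) ∂F :=
    integral_nonneg fun z => (Real.exp_pos _).le
  have hupper : lam * ∫ z, K z * Real.exp (γ * B * (z + wt * K z)) ∂F
      ≤ δ * ∫ z, Real.exp (γ * B * z) ∂F :=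
    mul_le_mul hlamδ hImono hInn (hlam.trans hlamδ)
  rw [div_sub_div_same, div_le_iff₀ hc]
  nlinarith [hroot, hupper]
end

section
/- With the same notation, suppose μ(t) - r(t) > λ ∫₀^∞ K(z) e^{γBz} dF(z) (condition defining C₂). Then the unique solution w̃₁ of γBσ²w - (μ-r) + λ∫K(z)e^{γB(z + wK(z))}dF(z) = 0 (first-order condition at u = 1) satisfies w̃₁ > 0, and hence the optimal investment w* > 0. -/
open MeasureTheory Real Set

/-- Proposition 5.5, second sign characterization: on the set C₂
(μ - r > λ ∫ K(z) e^{γBz} dF), the root of the first-order condition at u = 1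
is positive, hence the optimal investment is positive. -/
theorem stmt_6 (γ B σ lam μ r w1 : ℝ)
    (hγ : 0 < γ) (hB : 0 < B) (hσ : 0 < σ) (hlam : 0 < lam)
    (F : Measure ℝ) [IsProbabilityMeasure F] (hF0 : F (Set.Iio 0) = 0)
    (K : ℝ → ℝ) (hKmeas : Measurable K) (hK : ∀ z, 0 ≤ K z ∧ K z < 1)
    (hexp : Integrable (fun z => Real.exp (γ * B * z)) F)
    (hC2 : lam * ∫ z, K z * Real.exp (γ * B * z) ∂F < μ - r)
    (hroot : γ * B * σ ^ 2 * w1 - (μ - r)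
        + lam * ∫ z, K z * Real.exp (γ * B * (z + w1 * K z)) ∂F = 0) :
    0 < w1 := by
  by_contra h
  push_neg at h
  have hc : 0 < γ * B := mul_pos hγ hB
  have hae : ∀ᵐ z ∂F, 0 ≤ z := by
    rw [ae_iff]
    simpa [Set.Iio, not_le] using hF0
  have hmeas1 : Measurable fun z => K z * Real.exp (γ * B * (z + w1 * K z)) :=
    hKmeas.mul (measurable_const.mul (measurable_id.add (measurable_const.mul hKmeas))).exp
  have hmeas2 : Measurable fun z => K z * Real.exp (γ * B * z) :=
    hKmeas.mul (measurable_const.mul measurable_id).exp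
  have hbound : ∀ z, 0 ≤ z →
      K z * Real.exp (γ * B * (z + w1 * K z)) ≤ Real.exp (γ * B * z) := by
    intro z hz
    obtain ⟨hK0, hK1⟩ := hK z
    have hle : γ * B * (z + w1 * K z) ≤ γ * B * z := by
      apply mul_le_mul_of_nonneg_left _ hc.le
      nlinarith
    calc K z * Real.exp (γ * B * (z + w1 * K z)) ≤ 1 * Real.exp (γ * B * z) :=
          mul_le_mul hK1.le (exp_le_exp.mpr hle) (exp_pos _).le zero_le_one
      _ = _ := one_mul _
  have hint1 : Integrable (fun z => K z * Real.exp (γ * B * (z + w1 * K z))) F := by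
    refine hexp.mono hmeas1.aestronglyMeasurable ?_
    filter_upwards [hae] with z hz
    rw [Real.norm_eq_abs, Real.norm_eq_abs, abs_exp,
      abs_of_nonneg (mul_nonneg (hK z).1 (exp_pos _).le)]
    exact hbound z hz
  have hint2 : Integrable (fun z => K z * Real.exp (γ * B * z)) F := by
    refine hexp.mono hmeas2.aestronglyMeasurable ?_
    filter_upwards [hae] with z hz
    rw [Real.norm_eq_abs, Real.norm_eq_abs, abs_exp,
      abs_of_nonneg (mul_nonneg (hK z).1 (exp_pos _).le)]
    calc K z * Real.exp (γ * B * z) ≤ 1 * Real.exp (γ * B * z) :=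
          mul_le_mul_of_nonneg_right (hK z).2.le (exp_pos _).le
      _ = _ := one_mul _
  have hle : ∫ z, K z * Real.exp (γ * B * (z + w1 * K z)) ∂F
      ≤ ∫ z, K z * Real.exp (γ * B * z) ∂F := by
    refine integral_mono_ae hint1 hint2 ?_
    filter_upwards [hae] with z hz
    obtain ⟨hK0, hK1⟩ := hK z
    apply mul_le_mul_of_nonneg_left _ hK0
    apply exp_le_exp.mpr
    apply mul_le_mul_of_nonneg_left _ hc.le
    nlinarith
  nlinarith [mul_pos hc (pow_pos hσ 2), sq_nonneg σ,
    mul_le_mul_of_nonneg_left hle hlam.le]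
end

section
/- Let F be a probability measure on [0,∞) not concentrated at 0, γ, b > 0, λ > 0, θ_R > 0, and define Ψ₁'(u) = -λ(1+θ_R)E[Z] + λ∫₀^∞ z e^{buz} dF(z) for u ≥ 0, where E[Z] = ∫z dF(z) ∈ (0,∞) and ∫ z e^{buz} dF(z) < ∞ for all u. Then Ψ₁'(0) = -λθ_R E[Z] < 0, so u = 0 (full reinsurance) is never a critical point with nonnegative derivative; the equation ∫₀^∞ z e^{buz} dF(z) = (1+θ_R)E[Z] has a unique solution ū > 0; and the minimizer of the corresponding convex function over [0,1] is min(1, ū). -/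
open MeasureTheory Real Set

private lemma posIoi (F : Measure ℝ) [IsProbabilityMeasure F] (hF0 : F (Set.Iio 0) = 0)
    (hFnot0 : F {0} < 1) : 0 < F (Set.Ioi 0) := by
  have h1 : F (Set.Iic 0) < 1 := by
    have h2 : F (Set.Iic 0) ≤ F (Set.Iio 0) + F {0} := by
      rw [← Set.Iio_union_right]; exact measure_union_le _ _
    rw [hF0, zero_add] at h2
    exact lt_of_le_of_lt h2 hFnot0
  have h3 := measure_compl (measurableSet_Iic (a := (0:ℝ))) (measure_ne_top F _)
  rw [Set.compl_Iic, measure_univ] at h3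
  rw [h3]
  exact tsub_pos_iff_lt.mpr h1

private lemma aeNonneg (F : Measure ℝ) (hF0 : F (Set.Iio 0) = 0) : ∀ᵐ z ∂F, 0 ≤ z := by
  rw [MeasureTheory.ae_iff]
  convert hF0 using 2
  ext z; simp [not_le]

private lemma Hmono (b : ℝ) (hb : 0 < b) (F : Measure ℝ) [IsProbabilityMeasure F]
    (hF0 : F (Set.Iio 0) = 0) (hFnot0 : F {0} < 1)
    (hint : ∀ u : ℝ, Integrable (fun z => z * Real.exp (b * u * z)) F)
    {u v : ℝ} (huv : u < v) :
    ∫ z, z * Real.exp (b * u * z) ∂F < ∫ z, z * Real.exp (b * v * z) ∂F := by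
  have hae := aeNonneg F hF0
  set g : ℝ → ℝ := fun z => z * Real.exp (b * v * z) - z * Real.exp (b * u * z) with hg
  have hgi : Integrable g F := (hint v).sub (hint u)
  have hnn : 0 ≤ᵐ[F] g := by
    filter_upwards [hae] with z hz
    have : Real.exp (b * u * z) ≤ Real.exp (b * v * z) :=
      Real.exp_le_exp.2 (mul_le_mul_of_nonneg_right (mul_le_mul_of_nonneg_left huv.le hb.le) hz)
    simp only [hg, Pi.zero_apply]; nlinarith
  have hpos : 0 < ∫ z, g z ∂F := by
    rw [MeasureTheory.integral_pos_iff_support_of_nonneg_ae hnn hgi]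
    refine lt_of_lt_of_le (posIoi F hF0 hFnot0) (measure_mono ?_)
    intro z hz
    have hz' : (0:ℝ) < z := hz
    have : Real.exp (b * u * z) < Real.exp (b * v * z) :=
      Real.exp_lt_exp.2 (mul_lt_mul_of_pos_right (mul_lt_mul_of_pos_left huv hb) hz')
    simp only [Function.mem_support, hg]
    nlinarith
  have := MeasureTheory.integral_sub (hint v) (hint u)
  simp only [hg] at hpos
  rw [this] at hpos
  linarith

private lemma Hcont (b : ℝ) (hb : 0 < b) (F : Measure ℝ) (hF0 : F (Set.Iio 0) = 0)
    (hint : ∀ u : ℝ, Integrable (fun z => z * Real.exp (b * u * z)) F) :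
    Continuous fun u => ∫ z, z * Real.exp (b * u * z) ∂F := by
  have hae := aeNonneg F hF0
  rw [continuous_iff_continuousAt]
  intro u0
  apply MeasureTheory.continuousAt_of_dominated
    (bound := fun z => z * Real.exp (b * (u0 + 1) * z))
  · exact Filter.Eventually.of_forall fun u => (hint u).1
  · filter_upwards [Iio_mem_nhds (lt_add_one u0)] with u hu
    filter_upwards [hae] with z hz
    rw [Real.norm_eq_abs, abs_mul, abs_of_nonneg hz, abs_of_pos (Real.exp_pos _)]
    have hu' : u ≤ u0 + 1 := le_of_lt hu
    exact mul_le_mul_of_nonneg_left (Real.exp_le_exp.2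
      (mul_le_mul_of_nonneg_right (mul_le_mul_of_nonneg_left hu' hb.le) hz)) hz
  · exact hint (u0 + 1)
  · exact Filter.Eventually.of_forall fun z =>
      (Continuous.continuousAt (by fun_prop))

private lemma Hunbdd (b : ℝ) (hb : 0 < b) (F : Measure ℝ) [IsProbabilityMeasure F]
    (hF0 : F (Set.Iio 0) = 0) (hFnot0 : F {0} < 1)
    (hint : ∀ u : ℝ, Integrable (fun z => z * Real.exp (b * u * z)) F) (T : ℝ) :
    ∃ U : ℝ, 0 < U ∧ T < ∫ z, z * Real.exp (b * U * z) ∂F := by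
  have hae := aeNonneg F hF0
  have hIoi := posIoi F hF0 hFnot0
  obtain ⟨ε, hε, hm⟩ : ∃ ε : ℝ, 0 < ε ∧ F (Set.Ici ε) ≠ 0 := by
    by_contra h
    push_neg at h
    have hsub : Set.Ioi (0:ℝ) ⊆ ⋃ n : ℕ, Set.Ici ((n:ℝ) + 1)⁻¹ := by
      intro z hz
      have hz' : (0:ℝ) < z := hz
      obtain ⟨n, hn⟩ := exists_nat_gt z⁻¹
      refine Set.mem_iUnion.2 ⟨n, ?_⟩
      have hn1 : (0:ℝ) < (n:ℝ) + 1 := by positivity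
      have hzz : z * z⁻¹ = 1 := mul_inv_cancel₀ hz'.ne'
      have : ((n:ℝ) + 1)⁻¹ ≤ z := by
        rw [inv_eq_one_div, div_le_iff₀ hn1]; nlinarith
      exact this
    have : F (Set.Ioi 0) = 0 :=
      measure_mono_null hsub (measure_iUnion_null fun n => h _ (by positivity))
    exact hIoi.ne' this
  set m := (F (Set.Ici ε)).toReal with hmdef
  have hm0 : 0 < m := ENNReal.toReal_pos hm (measure_ne_top _ _)
  set C : ℝ := max 0 (T / (ε * m)) with hC
  refine ⟨(C + 1) / (b * ε), by positivity, ?_⟩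
  set U : ℝ := (C + 1) / (b * ε) with hU
  have hU0 : 0 < U := by positivity
  have hbUε : b * U * ε = C + 1 := by
    rw [hU]; field_simp
  have h1 : ε * Real.exp (b * U * ε) * m ≤ ∫ z in Set.Ici ε, z * Real.exp (b * U * z) ∂F := by
    rw [show ε * Real.exp (b * U * ε) * m = F.real (Set.Ici ε) • (ε * Real.exp (b * U * ε)) by
      rw [smul_eq_mul, hmdef, Measure.real]; ring]
    apply MeasureTheory.setIntegral_ge_of_const_le measurableSet_Ici (measure_ne_top _ _)
    · intro z hz
      have hz' : ε ≤ z := hz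
      have he : Real.exp (b * U * ε) ≤ Real.exp (b * U * z) :=
        Real.exp_le_exp.2 (mul_le_mul_of_nonneg_left hz' (by positivity))
      nlinarith [Real.exp_pos (b * U * ε)]
    · exact (hint U).integrableOn
  have h2 : ∫ z in Set.Ici ε, z * Real.exp (b * U * z) ∂F ≤ ∫ z, z * Real.exp (b * U * z) ∂F := by
    apply MeasureTheory.setIntegral_le_integral (hint U)
    filter_upwards [hae] with z hz
    positivity
  have h3 : T < ε * Real.exp (b * U * ε) * m := by
    rw [hbUε]
    have hCT : T / (ε * m) ≤ C := le_max_right _ _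
    have hT : T = T / (ε * m) * (ε * m) := by field_simp
    have hexp : C + 1 + 1 ≤ Real.exp (C + 1) := Real.add_one_le_exp (C + 1)
    have hεm : 0 < ε * m := mul_pos hε hm0
    nlinarith [mul_le_mul_of_nonneg_right hCT hεm.le,
      mul_le_mul_of_nonneg_right hexp hεm.le]
  linarith

/-- Example 5.1(1): under the expected value premium principle, full reinsurance is
never optimal (Ψ₁'(0) = -λθ_R E[Z] < 0), the first-order condition has a unique
positive root ū, and the minimizer of the convex objective over [0,1] is min(1, ū). -/
theorem stmt_7 (γ B lam θ b : ℝ)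
    (hγ : 0 < γ) (hB : 0 < B) (hlam : 0 < lam) (hθ : 0 < θ) (hb : b = γ * B)
    (F : Measure ℝ) [IsProbabilityMeasure F] (hF0 : F (Set.Iio 0) = 0)
    (hFnot0 : F {0} < 1)
    (hZint : Integrable (fun z => z) F) (hEZ : 0 < ∫ z, z ∂F)
    (hint : ∀ u : ℝ, Integrable (fun z => z * Real.exp (b * u * z)) F)
    (hint2 : ∀ u : ℝ, Integrable (fun z => Real.exp (b * u * z)) F)
    (D G : ℝ → ℝ)
    (hD : ∀ u, D u = -lam * (1 + θ) * (∫ z, z ∂F)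
        + lam * ∫ z, z * Real.exp (b * u * z) ∂F)
    (hG : ∀ u, G u = -lam * (1 + θ) * (∫ z, z ∂F) * u
        + (lam / b) * ∫ z, Real.exp (b * u * z) ∂F) :
    D 0 = -lam * θ * ∫ z, z ∂F ∧ D 0 < 0 ∧
      (∃! u : ℝ, 0 < u ∧
        ∫ z, z * Real.exp (b * u * z) ∂F = (1 + θ) * ∫ z, z ∂F) ∧
      ∀ ub : ℝ, 0 < ub →
        (∫ z, z * Real.exp (b * ub * z) ∂F = (1 + θ) * ∫ z, z ∂F) →
        IsMinOn G (Set.Icc 0 1) (min 1 ub) := by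
  have hb0 : 0 < b := by rw [hb]; positivity
  set EZ := ∫ z, z ∂F with hEZdef
  have hH0 : (∫ z, z * Real.exp (b * 0 * z) ∂F) = EZ := by
    simp [hEZdef]
  have hD0 : D 0 = -lam * θ * EZ := by
    rw [hD 0, hH0]; ring
  refine ⟨hD0, ?_, ?_, ?_⟩
  · rw [hD0]; nlinarith [mul_pos (mul_pos hlam hθ) hEZ]
  · -- unique root
    set T : ℝ := (1 + θ) * EZ with hT
    obtain ⟨U, hU0, hUT⟩ := Hunbdd b hb0 F hF0 hFnot0 hint T
    have hcont := Hcont b hb0 F hF0 hint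
    have h0T : (∫ z, z * Real.exp (b * 0 * z) ∂F) < T := by
      rw [hH0, hT]; nlinarith
    have := intermediate_value_Ioo (le_of_lt hU0) hcont.continuousOn
      (Set.mem_Ioo.2 ⟨h0T, hUT⟩)
    obtain ⟨u, hu, huT0⟩ := this
    have huT : ∫ z, z * Real.exp (b * u * z) ∂F = T := huT0
    refine ⟨u, ⟨hu.1, huT⟩, ?_⟩
    intro y hy
    rcases lt_trichotomy y u with h | h | h
    · exfalso
      have := Hmono b hb0 F hF0 hFnot0 hint h
      rw [hy.2, huT] at this; exact lt_irrefl _ this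
    · exact h
    · exfalso
      have := Hmono b hb0 F hF0 hFnot0 hint h
      rw [hy.2, huT] at this; exact lt_irrefl _ this
  · -- minimizer
    intro ub hub hubeq
    have hae := aeNonneg F hF0
    set m : ℝ := min 1 ub with hm
    -- key inequality: ∀ v, G v ≥ G m + lam * (v - m) * (H m - (1+θ) EZ)
    have key : ∀ v : ℝ, G m + lam * (v - m) *
        ((∫ z, z * Real.exp (b * m * z) ∂F) - (1 + θ) * EZ) ≤ G v := by
      intro v
      have hpt : ∀ z : ℝ, Real.exp (b * m * z) + (b * (v - m)) * (z * Real.exp (b * m * z))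
          ≤ Real.exp (b * v * z) := by
        intro z
        have h1 : b * (v - m) * z + 1 ≤ Real.exp (b * (v - m) * z) :=
          Real.add_one_le_exp _
        have h2 : Real.exp (b * v * z) = Real.exp (b * m * z) * Real.exp (b * (v - m) * z) := by
          rw [← Real.exp_add]; ring_nf
        nlinarith [Real.exp_pos (b * m * z)]
      have hIle : (∫ z, Real.exp (b * m * z) ∂F) + (b * (v - m)) *
          (∫ z, z * Real.exp (b * m * z) ∂F) ≤ ∫ z, Real.exp (b * v * z) ∂F := by
        rw [← MeasureTheory.integral_const_mul,
          ← MeasureTheory.integral_add (hint2 m) ((hint m).const_mul _)]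
        exact MeasureTheory.integral_mono
          ((hint2 m).add ((hint m).const_mul (b * (v - m)))) (hint2 v) (fun z => hpt z)
      rw [hG v, hG m]
      have hlb : 0 ≤ lam / b := by positivity
      have h4 : lam / b * (∫ z, Real.exp (b * m * z) ∂F)
          + lam * (v - m) * (∫ z, z * Real.exp (b * m * z) ∂F)
          ≤ lam / b * ∫ z, Real.exp (b * v * z) ∂F := by
        have h5 := mul_le_mul_of_nonneg_left hIle hlb
        rw [mul_add] at h5
        have h6 : lam / b * (b * (v - m) * ∫ z, z * Real.exp (b * m * z) ∂F)
            = lam * (v - m) * ∫ z, z * Real.exp (b * m * z) ∂F := by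
          field_simp
        linarith
      nlinarith [h4]
    apply isMinOn_iff.2
    intro v hv
    rcases le_or_gt ub 1 with h1 | h1
    · have hmeq : m = ub := by rw [hm]; exact min_eq_right h1
      have hk := key v
      rw [hmeq, hubeq] at hk
      rw [hmeq]
      nlinarith [hk]
    · have hmeq : m = 1 := by rw [hm]; exact min_eq_left (le_of_lt h1)
      have hmono := Hmono b hb0 F hF0 hFnot0 hint h1
      rw [hubeq] at hmono
      have hv1 : v ≤ 1 := hv.2
      have hk := key v
      rw [hmeq] at hk ⊢
      have ha : lam * (v - 1) ≤ 0 := mul_nonpos_of_nonneg_of_nonpos hlam.le (by linarith)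
      have hb2 : (∫ z, z * Real.exp (b * 1 * z) ∂F) - (1 + θ) * EZ ≤ 0 := by linarith
      have hfac : 0 ≤ lam * (v - 1) * ((∫ z, z * Real.exp (b * 1 * z) ∂F) - (1 + θ) * EZ) := by
        nlinarith [mul_nonneg (neg_nonneg.2 ha) (neg_nonneg.2 hb2)]
      linarith
end

section
/- Under the expected value premium principle with multiplicative jumps K(t,z) = k(t)z, the first-order system H = 0, H̃ = 0 decouples: setting φ = u + wk(t), the equation H = 0 becomes ∫₀^∞ z e^{γB(t,T)zφ} dF(z) = (1+θ_R)E[Z], with unique solution φ*(t) independent of y and of w; and substituting into H̃ = 0 yields the explicit solution w̄(t,y) = (μ(t)-r(t))/(γB(t,T)σ²(t)) - λ(t,y)k(t)(1+θ_R)E[Z]/(γB(t,T)σ²(t)), and ū(t,y) = φ*(t) - w̄(t,y)k(t). -/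
open MeasureTheory Real Set

lemma aux_ae_mem (F : Measure ℝ) (D : ℝ) (hF0 : F (Set.Iio 0) = 0)
    (hFD : F (Set.Ioi D) = 0) : ∀ᵐ z ∂F, z ∈ Set.Icc 0 D := by
  have : F (Set.Icc 0 D)ᶜ = 0 := by
    have hsub : (Set.Icc 0 D)ᶜ ⊆ Set.Iio 0 ∪ Set.Ioi D := by
      intro z hz
      simp only [Set.mem_compl_iff, Set.mem_Icc, not_and_or, not_le] at hz
      rcases hz with h | h
      · exact Or.inl h
      · exact Or.inr h
    exact measure_mono_null hsub (by
      exact le_antisymm ((measure_union_le _ _).trans (by simp [hF0, hFD])) zero_le)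
  exact Filter.eventually_of_mem (mem_ae_iff.2 this) (fun x hx => hx)

lemma aux_integrable (b c D : ℝ) (F : Measure ℝ) [IsProbabilityMeasure F]
    (hF0 : F (Set.Iio 0) = 0) (hFD : F (Set.Ioi D) = 0) (hD : 0 < D) :
    Integrable (fun z => z * Real.exp (b * z * c)) F := by
  refine Integrable.mono' (integrable_const (D * Real.exp (|b * c| * D)))
    ((measurable_id.mul ((measurable_const.mul measurable_id).mul measurable_const).exp).aestronglyMeasurable) ?_
  filter_upwards [aux_ae_mem F D hF0 hFD] with z hz
  rcases hz with ⟨hz0, hzD⟩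
  rw [Real.norm_eq_abs, abs_mul, abs_of_nonneg hz0, Real.abs_exp]
  have h1 : b * z * c ≤ |b * c| * D := by
    have : b * z * c = (b * c) * z := by ring
    rw [this]
    calc (b * c) * z ≤ |b * c| * z := mul_le_mul_of_nonneg_right (le_abs_self _) hz0
    _ ≤ |b * c| * D := mul_le_mul_of_nonneg_left hzD (abs_nonneg _)
  exact mul_le_mul hzD (Real.exp_le_exp.2 h1) (Real.exp_pos _).le hD.le

lemma aux_strictMono (b D : ℝ) (hb : 0 < b) (hD : 0 < D) (F : Measure ℝ)
    [IsProbabilityMeasure F] (hF0 : F (Set.Iio 0) = 0) (hFD : F (Set.Ioi D) = 0)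
    (hFnot0 : F {0} < 1) :
    StrictMono (fun c => ∫ z, z * Real.exp (b * z * c) ∂F) := by
  intro c1 c2 h12
  have hi1 := aux_integrable b c1 D F hF0 hFD hD
  have hi2 := aux_integrable b c2 D F hF0 hFD hD
  set g : ℝ → ℝ := fun z => z * Real.exp (b * z * c2) - z * Real.exp (b * z * c1) with hg
  have hgint : Integrable g F := hi2.sub hi1
  have hgnonneg : 0 ≤ᵐ[F] g := by
    filter_upwards [aux_ae_mem F D hF0 hFD] with z hz
    have hz0 := hz.1
    have : b * z * c1 ≤ b * z * c2 :=
      mul_le_mul_of_nonneg_left h12.le (mul_nonneg hb.le hz0)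
    simp only [g, Pi.zero_apply, sub_nonneg]
    exact mul_le_mul_of_nonneg_left (Real.exp_le_exp.2 this) hz0
  have hsupp : Set.Ioi (0:ℝ) ⊆ Function.support g := by
    intro z hz
    have hz : (0:ℝ) < z := hz
    have : b * z * c1 < b * z * c2 :=
      mul_lt_mul_of_pos_left h12 (mul_pos hb hz)
    have hlt : z * Real.exp (b * z * c1) < z * Real.exp (b * z * c2) :=
      mul_lt_mul_of_pos_left (Real.exp_lt_exp.2 this) hz
    simp only [Function.mem_support, g]
    exact sub_ne_zero.2 (ne_of_gt hlt)
  have hIoi : 0 < F (Set.Ioi 0) := by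
    have hIic : F (Set.Iic 0) ≤ F {0} := by
      have : Set.Iic (0:ℝ) = Set.Iio 0 ∪ {0} := by
        ext x; simp [le_iff_lt_or_eq]
      rw [this]
      exact (measure_union_le _ _).trans (by simp [hF0])
    have hcompl : F (Set.Ioi 0) = 1 - F (Set.Iic 0) := by
      have : Set.Ioi (0:ℝ) = (Set.Iic 0)ᶜ := by ext x; simp
      rw [this, measure_compl measurableSet_Iic (measure_ne_top F _), measure_univ]
    rw [hcompl]
    have : F (Set.Iic 0) < 1 := lt_of_le_of_lt hIic hFnot0
    exact tsub_pos_of_lt this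
  have hpos : 0 < ∫ z, g z ∂F := by
    rw [integral_pos_iff_support_of_nonneg_ae hgnonneg hgint]
    exact lt_of_lt_of_le hIoi (measure_mono hsupp)
  have := integral_sub hi2 hi1
  simp only [g] at hpos
  rw [integral_sub hi2 hi1] at hpos
  linarith

/-- Corollary 5.9: under the expected value premium principle with multiplicative
jumps K(t,z) = k z, the first-order system decouples via φ = u + w k; the equation
∫ z e^{bzφ} dF = (1+θ_R)E[Z] has a unique solution φ*, and the pair
(ū, w̄) = (φ* - w̄ k, (μ-r)/(bσ²) - λ k (1+θ_R)E[Z]/(bσ²)) solves H = 0, H̃ = 0. -/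
theorem stmt_13 (b σ lamv k θ μ r EZ D φs wb ub : ℝ)
    (hb : 0 < b) (hσ : 0 < σ) (hlam : 0 < lamv) (hθ : 0 < θ) (hD : 0 < D)
    (hk : 0 < k) (hkD : k < 1 / D)
    (F : Measure ℝ) [IsProbabilityMeasure F] (hF0 : F (Set.Iio 0) = 0)
    (hFD : F (Set.Ioi D) = 0) (hFnot0 : F {0} < 1)
    (hEZ : EZ = ∫ z, z ∂F) (hEZpos : 0 < EZ)
    (hφs : ∫ z, z * Real.exp (b * z * φs) ∂F = (1 + θ) * EZ)
    (hwb : wb = (μ - r) / (b * σ ^ 2) - lamv * k * (1 + θ) * EZ / (b * σ ^ 2))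
    (hub : ub = φs - wb * k) :
    (∃! φ : ℝ, ∫ z, z * Real.exp (b * z * φ) ∂F = (1 + θ) * EZ) ∧
      lamv * (-(1 + θ) * EZ
          + ∫ z, z * Real.exp (b * (z * ub + wb * k * z)) ∂F) = 0 ∧
      b * σ ^ 2 * wb - (μ - r)
          + k * lamv * ∫ z, z * Real.exp (b * z * (ub + wb * k)) ∂F = 0 := by
  have hsum : ub + wb * k = φs := by rw [hub]; ring
  have hbσ : b * σ ^ 2 ≠ 0 := by positivity
  refine ⟨⟨φs, hφs, fun y hy =>
    (aux_strictMono b D hb hD F hF0 hFD hFnot0).injective (hy.trans hφs.symm)⟩, ?_, ?_⟩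
  · have h1 : ∀ z : ℝ, b * (z * ub + wb * k * z) = b * z * φs := by
      intro z; rw [← hsum]; ring
    simp_rw [h1, hφs]
    ring
  · have h2 : ∀ z : ℝ, b * z * (ub + wb * k) = b * z * φs := by
      intro z; rw [hsum]
    simp_rw [h2, hφs, hwb]
    field_simp
    ring
end

section
/- Let H(u,w) = q'(u) + λ∫₀^∞ z e^{γB(zu + wK(z))} dF(z) and H^{no}(u) = q'(u) + λ∫₀^∞ z e^{γBzu} dF(z), where q' ≤ 0 is continuous nondecreasing, λ > 0, γ, B > 0, K : [0,∞) → [0,1) with ∫zK(z)dF(z) > 0, and F a probability measure on [0,∞) with the required exponential moments. Then for w > 0, H(u,w) > H^{no}(u) for all u; since both are strictly increasing in u, the root ū(w) of H(·,w) = 0 satisfies ū(w) < ū^{no} (the root of H^{no} = 0) whenever w > 0, and ū(w) > ū^{no} whenever w < 0. -/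
open MeasureTheory Real Set

/-- Proposition 6.1(ii)-(iii): comparison of the optimal retention levels with and
without common shock. For w > 0, H(u,w) > H^{no}(u), so the root of H(·,w) = 0 is
strictly smaller than the root of H^{no} = 0, and conversely for w < 0. -/
theorem stmt_16 (γ B lam b : ℝ)
    (hγ : 0 < γ) (hB : 0 < B) (hlam : 0 < lam) (hb : b = γ * B)
    (F : Measure ℝ) [IsProbabilityMeasure F] (hF0 : F (Set.Iio 0) = 0)
    (K : ℝ → ℝ) (hKmeas : Measurable K) (hK : ∀ z, 0 ≤ K z ∧ K z < 1)
    (hKpos : 0 < ∫ z, z * K z ∂F)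
    (hint : ∀ u w : ℝ,
      Integrable (fun z => z * Real.exp (b * (z * u + w * K z))) F)
    (q' : ℝ → ℝ) (hq'cont : Continuous q') (hq'mono : Monotone q')
    (hq'nonpos : ∀ u, q' u ≤ 0)
    (H : ℝ → ℝ → ℝ) (Hno : ℝ → ℝ)
    (hH : ∀ u w, H u w = q' u + lam * ∫ z, z * Real.exp (b * (z * u + w * K z)) ∂F)
    (hHno : ∀ u, Hno u = q' u + lam * ∫ z, z * Real.exp (b * z * u) ∂F) :
    (∀ u w, 0 < w → Hno u < H u w) ∧
      (∀ w ub ubno, 0 < w → H ub w = 0 → Hno ubno = 0 → ub < ubno) ∧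
      (∀ w ub ubno, w < 0 → H ub w = 0 → Hno ubno = 0 → ubno < ub) := by
  have hb' : 0 < b := by rw [hb]; exact mul_pos hγ hB
  -- a.e. z is nonnegative
  have hae : ∀ᵐ z ∂F, 0 ≤ z := by
    rw [ae_iff]
    convert hF0 using 2
    ext z; simp [Set.mem_Iio, not_le]
  -- the identity function is integrable
  have hz_int : Integrable (fun z : ℝ => z) F := by
    have h := hint 0 0
    simpa using h
  -- z * K z is integrable
  have hzK_int : Integrable (fun z => z * K z) F := by
    refine hz_int.mono ((measurable_id.mul hKmeas).aestronglyMeasurable) ?_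
    filter_upwards [hae] with z hz
    have h1 := (hK z).1
    have h2 := (hK z).2.le
    rw [Real.norm_eq_abs, Real.norm_eq_abs, abs_of_nonneg (mul_nonneg hz h1),
      abs_of_nonneg hz]
    nlinarith
  set S : Set ℝ := {z : ℝ | 0 < z ∧ 0 < K z} with hSdef
  -- S has positive measure
  have hS : 0 < F S := by
    have h1 : 0 < F (Function.support fun z => z * K z) := by
      rw [← MeasureTheory.integral_pos_iff_support_of_nonneg_ae ?_ hzK_int]
      · exact hKpos
      · filter_upwards [hae] with z hz
        exact mul_nonneg hz (hK z).1
    have hsub : (Function.support fun z => z * K z) ⊆ S ∪ Set.Iio 0 := by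
      intro z hz
      rcases lt_or_ge z 0 with h | h
      · exact Or.inr h
      · left
        have hz0 : z ≠ 0 := fun h0 => hz (by simp [h0])
        have hK0 : K z ≠ 0 := fun h0 => hz (by simp [h0])
        exact ⟨lt_of_le_of_ne h (Ne.symm hz0), lt_of_le_of_ne (hK z).1 (Ne.symm hK0)⟩
    calc 0 < F (Function.support fun z => z * K z) := h1
      _ ≤ F (S ∪ Set.Iio 0) := measure_mono hsub
      _ ≤ F S + F (Set.Iio 0) := measure_union_le _ _
      _ = F S := by rw [hF0, add_zero]
  -- key strict comparison lemma
  have key : ∀ (f g : ℝ → ℝ), Integrable f F → Integrable g F →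
      (∀ z, 0 ≤ z → f z ≤ g z) → (∀ z ∈ S, f z < g z) →
      ∫ z, f z ∂F < ∫ z, g z ∂F := by
    intro f g hf hg hle hlt
    have hgf : Integrable (fun z => g z - f z) F := hg.sub hf
    have hnn : 0 ≤ᵐ[F] fun z => g z - f z := by
      filter_upwards [hae] with z hz
      simpa using sub_nonneg.mpr (hle z hz)
    have hpos : 0 < ∫ z, (g z - f z) ∂F := by
      refine (MeasureTheory.integral_pos_iff_support_of_nonneg_ae hnn hgf).mpr ?_
      refine lt_of_lt_of_le hS (measure_mono ?_)
      intro z hz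
      exact sub_ne_zero.mpr (hlt z hz).ne'
    have hsub := MeasureTheory.integral_sub hg hf
    have : (∫ z, g z ∂F) - ∫ z, f z ∂F = ∫ z, (g z - f z) ∂F := by
      rw [hsub]
    linarith
  -- integrability of the no-shock integrand
  have hint_no : ∀ u : ℝ, Integrable (fun z => z * Real.exp (b * z * u)) F := by
    intro u
    have h := hint u 0
    refine h.congr ?_
    filter_upwards with z
    ring_nf
  -- comparison of integrals: w > 0
  have hcomp : ∀ u w : ℝ, 0 < w →
      (∫ z, z * Real.exp (b * z * u) ∂F) <
        ∫ z, z * Real.exp (b * (z * u + w * K z)) ∂F := by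
    intro u w hw
    refine key _ _ (hint_no u) (hint u w) ?_ ?_
    · intro z hz
      have : b * z * u ≤ b * (z * u + w * K z) := by
        have : 0 ≤ w * K z := mul_nonneg hw.le (hK z).1
        nlinarith
      exact mul_le_mul_of_nonneg_left (Real.exp_le_exp.mpr this) hz
    · intro z hz
      obtain ⟨hz0, hKz⟩ := hz
      have : b * z * u < b * (z * u + w * K z) := by
        nlinarith [mul_pos hb' (mul_pos hw hKz)]
      exact mul_lt_mul_of_pos_left (Real.exp_lt_exp.mpr this) hz0
  -- comparison of integrals: w < 0
  have hcomp' : ∀ u w : ℝ, w < 0 →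
      (∫ z, z * Real.exp (b * (z * u + w * K z)) ∂F) <
        ∫ z, z * Real.exp (b * z * u) ∂F := by
    intro u w hw
    refine key _ _ (hint u w) (hint_no u) ?_ ?_
    · intro z hz
      have : b * (z * u + w * K z) ≤ b * z * u := by
        have : w * K z ≤ 0 := mul_nonpos_of_nonpos_of_nonneg hw.le (hK z).1
        nlinarith
      exact mul_le_mul_of_nonneg_left (Real.exp_le_exp.mpr this) hz
    · intro z hz
      obtain ⟨hz0, hKz⟩ := hz
      have : b * (z * u + w * K z) < b * z * u := by
        have h := mul_pos hb' (mul_pos (neg_pos.mpr hw) hKz)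
        nlinarith [h]
      exact mul_lt_mul_of_pos_left (Real.exp_lt_exp.mpr this) hz0
  -- strict monotonicity of Hno
  have hHnoMono : StrictMono Hno := by
    intro u1 u2 h12
    rw [hHno, hHno]
    have : (∫ z, z * Real.exp (b * z * u1) ∂F) <
        ∫ z, z * Real.exp (b * z * u2) ∂F := by
      refine key _ _ (hint_no u1) (hint_no u2) ?_ ?_
      · intro z hz
        have : b * z * u1 ≤ b * z * u2 :=
          mul_le_mul_of_nonneg_left h12.le (mul_nonneg hb'.le hz)
        exact mul_le_mul_of_nonneg_left (Real.exp_le_exp.mpr this) hz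
      · intro z hz
        obtain ⟨hz0, _⟩ := hz
        have : b * z * u1 < b * z * u2 :=
          mul_lt_mul_of_pos_left h12 (mul_pos hb' hz0)
        exact mul_lt_mul_of_pos_left (Real.exp_lt_exp.mpr this) hz0
    have hq := hq'mono h12.le
    nlinarith
  -- strict monotonicity of H in u
  have hHMono : ∀ w, StrictMono (fun u => H u w) := by
    intro w u1 u2 h12
    simp only
    rw [hH, hH]
    have : (∫ z, z * Real.exp (b * (z * u1 + w * K z)) ∂F) <
        ∫ z, z * Real.exp (b * (z * u2 + w * K z)) ∂F := by
      refine key _ _ (hint u1 w) (hint u2 w) ?_ ?_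
      · intro z hz
        have : b * (z * u1 + w * K z) ≤ b * (z * u2 + w * K z) := by
          nlinarith [mul_le_mul_of_nonneg_left h12.le (mul_nonneg hb'.le hz)]
        exact mul_le_mul_of_nonneg_left (Real.exp_le_exp.mpr this) hz
      · intro z hz
        obtain ⟨hz0, _⟩ := hz
        have : b * (z * u1 + w * K z) < b * (z * u2 + w * K z) := by
          nlinarith [mul_lt_mul_of_pos_left h12 (mul_pos hb' hz0)]
        exact mul_lt_mul_of_pos_left (Real.exp_lt_exp.mpr this) hz0
    have hq := hq'mono h12.le
    nlinarith
  have part1 : ∀ u w, 0 < w → Hno u < H u w := by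
    intro u w hw
    rw [hHno, hH]
    have := hcomp u w hw
    nlinarith
  refine ⟨part1, ?_, ?_⟩
  · intro w ub ubno hw hub hubno
    have h1 : Hno ub < Hno ubno := by
      rw [hubno, ← hub]; exact part1 ub w hw
    exact hHnoMono.lt_iff_lt.mp h1
  · intro w ub ubno hw hub hubno
    have h2 : H ubno w < H ub w := by
      rw [hub, ← hubno, hHno, hH]
      have := hcomp' ubno w hw
      nlinarith
    exact (hHMono w).lt_iff_lt.mp h2
end
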